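/- arXiv:2511.19466 — 2 statements merged into one kernel-verified Lean document; each statement's English description precedes it below -/
import Mathlib

section
/- Combining the residual bound with the margin condition: let H ≻ 0 with λ_min(H) ≥ m, suppose scores Î(z) = -φᵀg_z and I(z) = -(H⁻¹v)ᵀg_z over a finite sample set S, the residual satisfies ‖v - Hφ‖ ≤ ε_r, and (max_{z∈S}‖g_z‖/m)·ε_r < γ_K/2 where γ_K is the top-K margin of the true scores. Then the top-K set under Î equals the top-K set under I. -/
open Matrix RealInnerProductSpace

lemma coerc_aux {d : ℕ} (H : Matrix (Fin d) (Fin d) ℝ) (hH : H.PosDef)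
    (m : ℝ) (hmin : ∀ i, m ≤ hH.isHermitian.eigenvalues i)
    (x : EuclideanSpace ℝ (Fin d)) : m * ‖x‖ ≤ ‖Matrix.toEuclideanLin H x‖ := by
  set b := hH.isHermitian.eigenvectorBasis with hb
  set T := Matrix.toEuclideanLin H with hT
  have hTb : ∀ i, T (b i) = hH.isHermitian.eigenvalues i • b i := by
    intro i; ext j
    have := congrFun (hH.isHermitian.mulVec_eigenvectorBasis i) j
    simpa [hT, hb, Matrix.toEuclideanLin_apply] using this
  have hsym : T.IsSymmetric := (Matrix.isHermitian_iff_isSymmetric).mp hH.isHermitian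
  have h1 : m * ‖x‖ ^ 2 ≤ ⟪x, T x⟫ := by
    have e1 : ⟪x, T x⟫ = ∑ i, ⟪x, b i⟫ * ⟪b i, T x⟫ := (b.sum_inner_mul_inner x (T x)).symm
    have e2 : ‖x‖ ^ 2 = ∑ i, ⟪x, b i⟫ * ⟪b i, x⟫ := by
      rw [b.sum_inner_mul_inner x x, real_inner_self_eq_norm_sq]
    rw [e1, e2, Finset.mul_sum]
    apply Finset.sum_le_sum
    intro i _
    have h3 : ⟪b i, T x⟫ = hH.isHermitian.eigenvalues i * ⟪b i, x⟫ := by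
      rw [← hsym (b i) x, hTb i, real_inner_smul_left]
    rw [h3, real_inner_comm x (b i)]
    have h2 : 0 ≤ ⟪b i, x⟫ * ⟪b i, x⟫ := mul_self_nonneg _
    nlinarith [hmin i]
  have h2 : ⟪x, T x⟫ ≤ ‖x‖ * ‖T x‖ := real_inner_le_norm x (T x)
  rcases eq_or_ne x 0 with rfl | hx
  · simp
  · have hxn : 0 < ‖x‖ := norm_pos_iff.mpr hx
    nlinarith

theorem stmt8 {d : ℕ} {α : Type*} [Fintype α] [DecidableEq α] [Nonempty α]
    (H : Matrix (Fin d) (Fin d) ℝ) (hH : H.PosDef)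
    (m : ℝ) (hm : 0 < m) (hmin : ∀ i, m ≤ hH.isHermitian.eigenvalues i)
    (v φ : EuclideanSpace ℝ (Fin d)) (g : α → EuclideanSpace ℝ (Fin d))
    (K : ℕ) (T : Finset α) (hT : T.card = K) (γ εr : ℝ) (hγ : 0 < γ)
    (hmargin : ∀ z ∈ T, ∀ u ∉ T,
      γ ≤ (-⟪Matrix.toEuclideanLin H⁻¹ v, g z⟫) - (-⟪Matrix.toEuclideanLin H⁻¹ v, g u⟫))
    (hres : ‖v - Matrix.toEuclideanLin H φ‖ ≤ εr)
    (hsmall : (Finset.univ.sup' Finset.univ_nonempty fun z => ‖g z‖) / m * εr < γ / 2) :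
    ∀ z ∈ T, ∀ u ∉ T, (-⟪φ, g u⟫) < (-⟪φ, g z⟫) := by
  set w : EuclideanSpace ℝ (Fin d) := Matrix.toEuclideanLin H⁻¹ v with hw
  set e : EuclideanSpace ℝ (Fin d) := φ - w with he
  have hdet : IsUnit H.det := isUnit_iff_ne_zero.mpr hH.det_pos.ne'
  have hHinv : H * H⁻¹ = 1 := Matrix.mul_nonsing_inv H hdet
  have hTw : Matrix.toEuclideanLin H w = v := by
    rw [hw]; ext j
    simp [Matrix.toEuclideanLin_apply, Matrix.mulVec_mulVec, hHinv]
  have hTe : Matrix.toEuclideanLin H e = Matrix.toEuclideanLin H φ - v := by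
    rw [he, map_sub, hTw]
  have hεr : 0 ≤ εr := le_trans (norm_nonneg _) hres
  have hne : m * ‖e‖ ≤ εr := by
    calc m * ‖e‖ ≤ ‖Matrix.toEuclideanLin H e‖ := coerc_aux H hH m hmin e
    _ = ‖v - Matrix.toEuclideanLin H φ‖ := by rw [hTe, ← norm_neg]; congr 1; abel
    _ ≤ εr := hres
  set M := Finset.univ.sup' Finset.univ_nonempty fun z => ‖g z‖ with hM
  have hkey : ∀ a : α, |⟪φ, g a⟫ - ⟪w, g a⟫| < γ / 2 := by
    intro a
    have h1 : ⟪φ, g a⟫ - ⟪w, g a⟫ = ⟪e, g a⟫ := by rw [he, inner_sub_left]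
    have h2 : |⟪e, g a⟫| ≤ ‖e‖ * ‖g a‖ := abs_real_inner_le_norm e (g a)
    have h3 : ‖g a‖ ≤ M := Finset.le_sup' (fun z => ‖g z‖) (Finset.mem_univ a)
    have h4 : ‖e‖ ≤ εr / m := by rw [le_div_iff₀ hm]; linarith
    have h5 : ‖e‖ * ‖g a‖ ≤ (εr / m) * M :=
      mul_le_mul h4 h3 (norm_nonneg _) (by positivity)
    rw [h1]
    calc |⟪e, g a⟫| ≤ (εr / m) * M := le_trans h2 h5
    _ = M / m * εr := by ring
    _ < γ / 2 := hsmall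
  intro z hz u hu
  have hmz := hmargin z hz u hu
  have h1 := abs_lt.mp (hkey z)
  have h2 := abs_lt.mp (hkey u)
  replace hmz : γ ≤ (-⟪w, g z⟫) - (-⟪w, g u⟫) := hmz
  linarith [h1.1, h1.2, h2.1, h2.2, hmz]
end

section
/- Single-anchor influence error bound in terms of residual: with H ≻ 0, λ_min(H) ≥ m, residual r = v - Hφ, c ∈ [0,1], I = -vᵀH⁻¹g, Î = -c·φᵀg, we have |Î - I| ≤ (c‖g‖/m)‖r‖ + (1 - c)‖H⁻¹‖‖g‖ where ‖H⁻¹‖ ≤ 1/m. -/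
open Matrix RealInnerProductSpace

lemma quad_lower_aux {d : ℕ} (H : Matrix (Fin d) (Fin d) ℝ) (hH : H.IsHermitian)
    (m : ℝ) (hmin : ∀ i, m ≤ hH.eigenvalues i) (x : EuclideanSpace ℝ (Fin d)) :
    m * ‖x‖ ^ 2 ≤ ⟪x, Matrix.toEuclideanLin H x⟫ := by
  set b := hH.eigenvectorBasis with hbdef
  have hS : (Matrix.toEuclideanLin H).IsSymmetric :=
    Matrix.isHermitian_iff_isSymmetric.mp hH
  have hb : ∀ i, Matrix.toEuclideanLin H (b i) = hH.eigenvalues i • b i := by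
    intro i
    apply (WithLp.equiv 2 (Fin d → ℝ)).injective
    have := hH.mulVec_eigenvectorBasis i
    simpa [Matrix.toEuclideanLin_apply] using this
  have key : ⟪x, Matrix.toEuclideanLin H x⟫ = ∑ i, hH.eigenvalues i * ⟪b i, x⟫ ^ 2 := by
    rw [← b.sum_inner_mul_inner x (Matrix.toEuclideanLin H x)]
    refine Finset.sum_congr rfl fun i _ => ?_
    have h1 : ⟪b i, Matrix.toEuclideanLin H x⟫ = hH.eigenvalues i * ⟪b i, x⟫ := by
      rw [← hS (b i) x, hb i, real_inner_smul_left]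
    rw [h1, real_inner_comm x (b i)]; ring
  have key2 : ‖x‖ ^ 2 = ∑ i, ⟪b i, x⟫ ^ 2 := by
    rw [← real_inner_self_eq_norm_sq, ← b.sum_inner_mul_inner x x]
    refine Finset.sum_congr rfl fun i _ => ?_
    rw [real_inner_comm x (b i)]; ring
  rw [key, key2, Finset.mul_sum]
  refine Finset.sum_le_sum fun i _ => ?_
  exact mul_le_mul_of_nonneg_right (hmin i) (sq_nonneg _)

lemma lin_eq_clm_aux {d : ℕ} (A : Matrix (Fin d) (Fin d) ℝ) (w : EuclideanSpace ℝ (Fin d)) :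
    Matrix.toEuclideanLin A w = Matrix.toEuclideanCLM (𝕜 := ℝ) (n := Fin d) A w := by
  rw [← Matrix.coe_toEuclideanCLM_eq_toEuclideanLin]
  rfl

lemma inv_clm_norm_le {d : ℕ} (H : Matrix (Fin d) (Fin d) ℝ) (hH : H.PosDef)
    (m : ℝ) (hm : 0 < m) (hmin : ∀ i, m ≤ hH.isHermitian.eigenvalues i) :
    ‖Matrix.toEuclideanCLM (𝕜 := ℝ) (n := Fin d) H⁻¹‖ ≤ 1 / m := by
  have hdet : IsUnit H.det := isUnit_iff_ne_zero.mpr hH.det_pos.ne'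
  refine ContinuousLinearMap.opNorm_le_bound _ (by positivity) fun x => ?_
  set y := Matrix.toEuclideanCLM (𝕜 := ℝ) (n := Fin d) H⁻¹ x with hy
  have hHy : Matrix.toEuclideanLin H y = x := by
    calc Matrix.toEuclideanLin H y = Matrix.toEuclideanCLM (𝕜 := ℝ) (n := Fin d) H y :=
          lin_eq_clm_aux H y
      _ = (Matrix.toEuclideanCLM (𝕜 := ℝ) (n := Fin d) H
            * Matrix.toEuclideanCLM (𝕜 := ℝ) (n := Fin d) H⁻¹) x := rfl
      _ = Matrix.toEuclideanCLM (𝕜 := ℝ) (n := Fin d) (H * H⁻¹) x := by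
          rw [_root_.map_mul]
      _ = x := by rw [Matrix.mul_nonsing_inv H hdet, _root_.map_one,
          ContinuousLinearMap.one_apply]
  have h1 : m * ‖y‖ ^ 2 ≤ ⟪y, x⟫ := by
    have := quad_lower_aux H hH.isHermitian m hmin y
    rwa [hHy] at this
  have h2 : ⟪y, x⟫ ≤ ‖y‖ * ‖x‖ := real_inner_le_norm y x
  rcases eq_or_ne ‖y‖ 0 with h0 | h0
  · rw [h0]; positivity
  · have hypos : 0 < ‖y‖ := lt_of_le_of_ne (norm_nonneg y) (Ne.symm h0)
    rw [div_mul_eq_mul_div, le_div_iff₀ hm]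
    nlinarith

theorem stmt10 {d : ℕ} (H : Matrix (Fin d) (Fin d) ℝ) (hH : H.PosDef)
    (m : ℝ) (hm : 0 < m) (hmin : ∀ i, m ≤ hH.isHermitian.eigenvalues i)
    (v φ g r : EuclideanSpace ℝ (Fin d))
    (hr : r = v - Matrix.toEuclideanLin H φ)
    (c : ℝ) (hc0 : 0 ≤ c) (hc1 : c ≤ 1) :
    |(-(c * ⟪φ, g⟫)) - (-⟪Matrix.toEuclideanLin H⁻¹ v, g⟫)|
      ≤ c * ‖g‖ / m * ‖r‖
        + (1 - c) * ‖Matrix.toEuclideanCLM (𝕜 := ℝ) (n := Fin d) H⁻¹‖ * ‖v‖ * ‖g‖ ∧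
    ‖Matrix.toEuclideanCLM (𝕜 := ℝ) (n := Fin d) H⁻¹‖ ≤ 1 / m := by
  have hdet : IsUnit H.det := isUnit_iff_ne_zero.mpr hH.det_pos.ne'
  set T := Matrix.toEuclideanCLM (𝕜 := ℝ) (n := Fin d) H⁻¹ with hT
  have hnorm : ‖T‖ ≤ 1 / m := inv_clm_norm_le H hH m hm hmin
  have hcoe : ∀ w : EuclideanSpace ℝ (Fin d), Matrix.toEuclideanLin H⁻¹ w = T w :=
    fun w => lin_eq_clm_aux H⁻¹ w
  have hTH : ∀ w : EuclideanSpace ℝ (Fin d), T (Matrix.toEuclideanLin H w) = w := by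
    intro w
    calc T (Matrix.toEuclideanLin H w)
        = T (Matrix.toEuclideanCLM (𝕜 := ℝ) (n := Fin d) H w) := by rw [lin_eq_clm_aux]
      _ = (Matrix.toEuclideanCLM (𝕜 := ℝ) (n := Fin d) H⁻¹
            * Matrix.toEuclideanCLM (𝕜 := ℝ) (n := Fin d) H) w := rfl
      _ = Matrix.toEuclideanCLM (𝕜 := ℝ) (n := Fin d) (H⁻¹ * H) w := by
          rw [_root_.map_mul]
      _ = w := by rw [Matrix.nonsing_inv_mul H hdet, _root_.map_one,
          ContinuousLinearMap.one_apply]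
  have hv : v = Matrix.toEuclideanLin H φ + r := by rw [hr]; abel
  have hTv : T v = φ + T r := by rw [hv, map_add, hTH]
  constructor
  · rw [hcoe v]
    have hsplit : -(c * ⟪φ, g⟫) - (-⟪T v, g⟫)
        = c * ⟪T r, g⟫ + (1 - c) * ⟪T v, g⟫ := by
      have : ⟪T v, g⟫ = ⟪φ, g⟫ + ⟪T r, g⟫ := by rw [hTv, inner_add_left]
      rw [this]; ring
    rw [hsplit]
    have b1 : |⟪T r, g⟫| ≤ ‖T r‖ * ‖g‖ := abs_real_inner_le_norm _ _
    have b2 : |⟪T v, g⟫| ≤ ‖T‖ * ‖v‖ * ‖g‖ := by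
      refine (abs_real_inner_le_norm _ _).trans ?_
      exact mul_le_mul_of_nonneg_right (T.le_opNorm v) (norm_nonneg g)
    have b3 : ‖T r‖ ≤ 1 / m * ‖r‖ :=
      (T.le_opNorm r).trans (mul_le_mul_of_nonneg_right hnorm (norm_nonneg r))
    have e1 : |c * ⟪T r, g⟫| ≤ c * ‖g‖ / m * ‖r‖ := by
      rw [abs_mul, abs_of_nonneg hc0]
      have : c * |⟪T r, g⟫| ≤ c * ((1 / m * ‖r‖) * ‖g‖) := by
        refine mul_le_mul_of_nonneg_left (b1.trans ?_) hc0
        exact mul_le_mul_of_nonneg_right b3 (norm_nonneg g)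
      calc c * |⟪T r, g⟫| ≤ c * ((1 / m * ‖r‖) * ‖g‖) := this
        _ = c * ‖g‖ / m * ‖r‖ := by field_simp
    have e2 : |(1 - c) * ⟪T v, g⟫| ≤ (1 - c) * ‖T‖ * ‖v‖ * ‖g‖ := by
      rw [abs_mul, abs_of_nonneg (by linarith : (0:ℝ) ≤ 1 - c)]
      calc (1 - c) * |⟪T v, g⟫| ≤ (1 - c) * (‖T‖ * ‖v‖ * ‖g‖) :=
            mul_le_mul_of_nonneg_left b2 (by linarith)
        _ = (1 - c) * ‖T‖ * ‖v‖ * ‖g‖ := by ring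
    calc |c * ⟪T r, g⟫ + (1 - c) * ⟪T v, g⟫|
        ≤ |c * ⟪T r, g⟫| + |(1 - c) * ⟪T v, g⟫| := abs_add_le _ _
      _ ≤ c * ‖g‖ / m * ‖r‖ + (1 - c) * ‖T‖ * ‖v‖ * ‖g‖ := add_le_add e1 e2
  · exact hnorm
end
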